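/- Let w₁, w₂, w₃, p₁, p₂, p₃, q₁, q₂, q₃ : ℝ → ℂ be functions, and define z₁ = (w₁,0,0), z₂ = (0,w₂,0), z₃ = (0,0,w₃), z₄ = (p₁,p₂,q₃), z₅ = (q₁,−q₂,p₃) as maps ℝ → ℂ³. Then: (i) the equations ω(z₂,z₃) = ω(z₁,z₃) = ω(z₁,z₂) = 0 hold automatically; (ii) the equations ω(z₁,z₅) + ω(z₂,z₅) − ω(z₃,z₄) = 0, −ω(z₁,z₄) + ω(z₂,z₄) + ω(z₃,z₅) = 0 and ω(z₄,z₅) = 0 hold if and only if Im(w₁ conj(p₁) − w₂ conj(p₂) − w₃ conj(p₃)) = Im(w₁ conj(q₁) − w₂ conj(q₂) − w₃ conj(q₃)) = Im(p₁ conj(q₁) − p₂ conj(q₂) − p₃ conj(q₃)) = 0; and (iii) if the functions are differentiable and satisfy dw₁/dt = conj(w₂w₃), dw₂/dt = −conj(w₃w₁), dw₃/dt = −conj(w₁w₂), dp₁/dt = ½(conj(w₂)conj(p₃) + conj(w₃)conj(p₂)), dp₂/dt = −½(conj(w₃)conj(p₁) + conj(w₁)conj(p₃)), dp₃/dt = −½(conj(w₁)conj(p₂)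 + conj(w₂)conj(p₁)), and the same three equations with q₁, q₂, q₃ in place of p₁, p₂, p₃, then the three quantities Im(w₁ conj(p₁) − w₂ conj(p₂) − w₃ conj(p₃)), Im(w₁ conj(q₁) − w₂ conj(q₂) − w₃ conj(q₃)) and Im(p₁ conj(q₁) − p₂ conj(q₂) − p₃ conj(q₃)) are constant functions of t. -/

import Mathlib

noncomputable section

open Complex ComplexConjugate

/-- ℂ³ as triples of complex numbers. -/
abbrev C3 := ℂ × ℂ × ℂ

/-- The standard Kähler form ω(u,v) = Σ Im(conj(u_j)·v_j). -/
def omega3 (u v : C3) : ℝ :=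
  (conj u.1 * v.1).im + (conj u.2.1 * v.2.1).im + (conj u.2.2 * v.2.2).im

lemma hasDerivAt_im_aux {f : ℝ → ℂ} {c : ℂ} {t : ℝ} (h : HasDerivAt f c t) :
    HasDerivAt (fun x => (f x).im) c.im t := by
  exact (Complex.imCLM.hasFDerivAt.comp_hasDerivAt t h)

lemma const_of_im_deriv {F : ℝ → ℂ} {D : ℝ → ℂ}
    (hF : ∀ t, HasDerivAt F (D t) t) (hD : ∀ t, (D t).im = 0) :
    ∀ s t, (F s).im = (F t).im := by
  intro s t
  have key : ∀ x, HasDerivAt (fun y => (F y).im) 0 x := by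
    intro x
    simpa [hD x] using hasDerivAt_im_aux (hF x)
  exact is_const_of_deriv_eq_zero (fun x => (key x).differentiableAt)
    (fun x => (key x).deriv) s t

lemma aux_wa (w₁ w₂ w₃ a₁ a₂ a₃ : ℝ → ℂ)
    (hw₁ : ∀ t, HasDerivAt w₁ (conj (w₂ t * w₃ t)) t)
    (hw₂ : ∀ t, HasDerivAt w₂ (-conj (w₃ t * w₁ t)) t)
    (hw₃ : ∀ t, HasDerivAt w₃ (-conj (w₁ t * w₂ t)) t)
    (ha₁ : ∀ t, HasDerivAt a₁ ((1/2 : ℂ) * (conj (w₂ t) * conj (a₃ t)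
        + conj (w₃ t) * conj (a₂ t))) t)
    (ha₂ : ∀ t, HasDerivAt a₂ (-(1/2 : ℂ) * (conj (w₃ t) * conj (a₁ t)
        + conj (w₁ t) * conj (a₃ t))) t)
    (ha₃ : ∀ t, HasDerivAt a₃ (-(1/2 : ℂ) * (conj (w₁ t) * conj (a₂ t)
        + conj (w₂ t) * conj (a₁ t))) t) :
    ∀ s t, (w₁ s * conj (a₁ s) - w₂ s * conj (a₂ s) - w₃ s * conj (a₃ s)).im
      = (w₁ t * conj (a₁ t) - w₂ t * conj (a₂ t) - w₃ t * conj (a₃ t)).im := by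
  apply const_of_im_deriv
    (D := fun t => (conj (w₂ t * w₃ t) * conj (a₁ t)
        + w₁ t * conj ((1/2 : ℂ) * (conj (w₂ t) * conj (a₃ t) + conj (w₃ t) * conj (a₂ t)))
      - (-conj (w₃ t * w₁ t) * conj (a₂ t)
        + w₂ t * conj (-(1/2 : ℂ) * (conj (w₃ t) * conj (a₁ t) + conj (w₁ t) * conj (a₃ t))))
      - (-conj (w₁ t * w₂ t) * conj (a₃ t)
        + w₃ t * conj (-(1/2 : ℂ) * (conj (w₁ t) * conj (a₂ t) + conj (w₂ t) * conj (a₁ t))))))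
  · intro t
    exact (((hw₁ t).mul (ha₁ t).star).sub ((hw₂ t).mul (ha₂ t).star)).sub
      ((hw₃ t).mul (ha₃ t).star)
  · intro t
    simp only [map_mul, map_add, map_neg, Complex.conj_conj, map_div₀, map_one, map_ofNat]
    simp [Complex.mul_im, Complex.mul_re, Complex.add_im, Complex.add_re,
      Complex.sub_im, Complex.sub_re, Complex.conj_re, Complex.conj_im,
      Complex.div_im, Complex.div_re, Complex.normSq]
    ring

lemma aux_pq (w₁ w₂ w₃ p₁ p₂ p₃ q₁ q₂ q₃ : ℝ → ℂ)
    (hp₁ : ∀ t, HasDerivAt p₁ ((1/2 : ℂ) * (conj (w₂ t) * conj (p₃ t)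
        + conj (w₃ t) * conj (p₂ t))) t)
    (hp₂ : ∀ t, HasDerivAt p₂ (-(1/2 : ℂ) * (conj (w₃ t) * conj (p₁ t)
        + conj (w₁ t) * conj (p₃ t))) t)
    (hp₃ : ∀ t, HasDerivAt p₃ (-(1/2 : ℂ) * (conj (w₁ t) * conj (p₂ t)
        + conj (w₂ t) * conj (p₁ t))) t)
    (hq₁ : ∀ t, HasDerivAt q₁ ((1/2 : ℂ) * (conj (w₂ t) * conj (q₃ t)
        + conj (w₃ t) * conj (q₂ t))) t)
    (hq₂ : ∀ t, HasDerivAt q₂ (-(1/2 : ℂ) * (conj (w₃ t) * conj (q₁ t)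
        + conj (w₁ t) * conj (q₃ t))) t)
    (hq₃ : ∀ t, HasDerivAt q₃ (-(1/2 : ℂ) * (conj (w₁ t) * conj (q₂ t)
        + conj (w₂ t) * conj (q₁ t))) t) :
    ∀ s t, (p₁ s * conj (q₁ s) - p₂ s * conj (q₂ s) - p₃ s * conj (q₃ s)).im
      = (p₁ t * conj (q₁ t) - p₂ t * conj (q₂ t) - p₃ t * conj (q₃ t)).im := by
  apply const_of_im_deriv
    (D := fun t => ((1/2 : ℂ) * (conj (w₂ t) * conj (p₃ t) + conj (w₃ t) * conj (p₂ t))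
          * conj (q₁ t)
        + p₁ t * conj ((1/2 : ℂ) * (conj (w₂ t) * conj (q₃ t) + conj (w₃ t) * conj (q₂ t)))
      - (-(1/2 : ℂ) * (conj (w₃ t) * conj (p₁ t) + conj (w₁ t) * conj (p₃ t)) * conj (q₂ t)
        + p₂ t * conj (-(1/2 : ℂ) * (conj (w₃ t) * conj (q₁ t) + conj (w₁ t) * conj (q₃ t))))
      - (-(1/2 : ℂ) * (conj (w₁ t) * conj (p₂ t) + conj (w₂ t) * conj (p₁ t)) * conj (q₃ t)
        + p₃ t * conj (-(1/2 : ℂ) * (conj (w₁ t) * conj (q₂ t) + conj (w₂ t) * conj (q₁ t))))))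
  · intro t
    exact (((hp₁ t).mul (hq₁ t).star).sub ((hp₂ t).mul (hq₂ t).star)).sub
      ((hp₃ t).mul (hq₃ t).star)
  · intro t
    simp only [map_mul, map_add, map_neg, Complex.conj_conj, map_div₀, map_one, map_ofNat]
    simp [Complex.mul_im, Complex.mul_re, Complex.add_im, Complex.add_re,
      Complex.sub_im, Complex.sub_re, Complex.conj_re, Complex.conj_im,
      Complex.div_im, Complex.div_re, Complex.normSq]
    ring

theorem statement_10
    (w₁ w₂ w₃ p₁ p₂ p₃ q₁ q₂ q₃ : ℝ → ℂ)
    (z₁ z₂ z₃ z₄ z₅ : ℝ → C3)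
    (hz1 : ∀ t, z₁ t = (w₁ t, 0, 0))
    (hz2 : ∀ t, z₂ t = (0, w₂ t, 0))
    (hz3 : ∀ t, z₃ t = (0, 0, w₃ t))
    (hz4 : ∀ t, z₄ t = (p₁ t, p₂ t, q₃ t))
    (hz5 : ∀ t, z₅ t = (q₁ t, -q₂ t, p₃ t)) :
    -- (i) the first three constraints hold automatically
    (∀ t : ℝ, omega3 (z₂ t) (z₃ t) = 0 ∧ omega3 (z₁ t) (z₃ t) = 0 ∧
      omega3 (z₁ t) (z₂ t) = 0) ∧
    -- (ii) the remaining constraints are equivalent to the Im conditions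
    (∀ t : ℝ,
      (omega3 (z₁ t) (z₅ t) + omega3 (z₂ t) (z₅ t) - omega3 (z₃ t) (z₄ t) = 0 ∧
       -omega3 (z₁ t) (z₄ t) + omega3 (z₂ t) (z₄ t) + omega3 (z₃ t) (z₅ t) = 0 ∧
       omega3 (z₄ t) (z₅ t) = 0)
      ↔
      ((w₁ t * conj (p₁ t) - w₂ t * conj (p₂ t) - w₃ t * conj (p₃ t)).im = 0 ∧
       (w₁ t * conj (q₁ t) - w₂ t * conj (q₂ t) - w₃ t * conj (q₃ t)).im = 0 ∧
       (p₁ t * conj (q₁ t) - p₂ t * conj (q₂ t) - p₃ t * conj (q₃ t)).im = 0)) ∧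
    -- (iii) under the evolution equations the three Im quantities are constant
    ((∀ t : ℝ, HasDerivAt w₁ (conj (w₂ t * w₃ t)) t) →
     (∀ t : ℝ, HasDerivAt w₂ (-conj (w₃ t * w₁ t)) t) →
     (∀ t : ℝ, HasDerivAt w₃ (-conj (w₁ t * w₂ t)) t) →
     (∀ t : ℝ, HasDerivAt p₁ ((1/2 : ℂ) * (conj (w₂ t) * conj (p₃ t)
        + conj (w₃ t) * conj (p₂ t))) t) →
     (∀ t : ℝ, HasDerivAt p₂ (-(1/2 : ℂ) * (conj (w₃ t) * conj (p₁ t)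
        + conj (w₁ t) * conj (p₃ t))) t) →
     (∀ t : ℝ, HasDerivAt p₃ (-(1/2 : ℂ) * (conj (w₁ t) * conj (p₂ t)
        + conj (w₂ t) * conj (p₁ t))) t) →
     (∀ t : ℝ, HasDerivAt q₁ ((1/2 : ℂ) * (conj (w₂ t) * conj (q₃ t)
        + conj (w₃ t) * conj (q₂ t))) t) →
     (∀ t : ℝ, HasDerivAt q₂ (-(1/2 : ℂ) * (conj (w₃ t) * conj (q₁ t)
        + conj (w₁ t) * conj (q₃ t))) t) →
     (∀ t : ℝ, HasDerivAt q₃ (-(1/2 : ℂ) * (conj (w₁ t) * conj (q₂ t)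
        + conj (w₂ t) * conj (q₁ t))) t) →
     (∀ s t : ℝ,
       (w₁ s * conj (p₁ s) - w₂ s * conj (p₂ s) - w₃ s * conj (p₃ s)).im
         = (w₁ t * conj (p₁ t) - w₂ t * conj (p₂ t) - w₃ t * conj (p₃ t)).im ∧
       (w₁ s * conj (q₁ s) - w₂ s * conj (q₂ s) - w₃ s * conj (q₃ s)).im
         = (w₁ t * conj (q₁ t) - w₂ t * conj (q₂ t) - w₃ t * conj (q₃ t)).im ∧
       (p₁ s * conj (q₁ s) - p₂ s * conj (q₂ s) - p₃ s * conj (q₃ s)).im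
         = (p₁ t * conj (q₁ t) - p₂ t * conj (q₂ t) - p₃ t * conj (q₃ t)).im)) := by
  refine ⟨?_, ?_, ?_⟩
  · intro t
    simp [omega3, hz1 t, hz2 t, hz3 t]
  · intro t
    rw [hz1 t, hz2 t, hz3 t, hz4 t, hz5 t]
    simp only [omega3, Complex.mul_im, Complex.mul_re, Complex.add_im, Complex.sub_im,
      Complex.conj_re, Complex.conj_im, Complex.neg_im, Complex.neg_re, Complex.zero_im,
      Complex.zero_re]
    constructor <;> rintro ⟨h1, h2, h3⟩ <;> refine ⟨by linarith, by linarith, by linarith⟩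
  · intro hw₁ hw₂ hw₃ hp₁ hp₂ hp₃ hq₁ hq₂ hq₃ s t
    exact ⟨aux_wa w₁ w₂ w₃ p₁ p₂ p₃ hw₁ hw₂ hw₃ hp₁ hp₂ hp₃ s t,
      aux_wa w₁ w₂ w₃ q₁ q₂ q₃ hw₁ hw₂ hw₃ hq₁ hq₂ hq₃ s t,
      aux_pq w₁ w₂ w₃ p₁ p₂ p₃ q₁ q₂ q₃ hp₁ hp₂ hp₃ hq₁ hq₂ hq₃ s t⟩
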